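/- Let Φ : ℝⁿ → ℝ ∪ {+∞} with Φ ≥ Φ_low everywhere, {x_k}_{0≤k≤K} a sequence with Φ(x₀) < +∞ and Φ(x_{k+1}) ≤ Φ(x_k) for all k < K, and σ : {0,…,K} → ℝ with σ_k > 0 and σ_k ≤ σ_max for all k. Let η₁, κ_mdc, ε ∈ (0, 1), γ₁ > 1, γ₃ ∈ (0, 1], and suppose {0,…,K−1} is partitioned into S and U such that Φ(x_k) − Φ(x_{k+1}) ≥ η₁ κ_mdc ε² and σ_{k+1} ≥ γ₃ σ_k for k ∈ S, while σ_{k+1} ≥ γ₁ σ_k for k ∈ U. Then K = |S| + |U| ≤ (1 + |log(γ₃)|/log(γ₁)) · (Φ(x₀) − Φ_low)/(η₁ κ_mdc ε²) + log(σ_max/σ₀)/log(γ₁); in particular K = O(ε⁻²). -/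

import Mathlib

/-- Theorem 4.6: worst-case iteration complexity bound K = O(ε⁻²). -/
theorem total_iteration_complexity {n : ℕ}
    (Φ : EuclideanSpace ℝ (Fin n) → EReal) (Φlow : ℝ)
    (hlow : ∀ y, (Φlow : EReal) ≤ Φ y)
    (K : ℕ) (x : ℕ → EuclideanSpace ℝ (Fin n))
    (h0 : Φ (x 0) < ⊤)
    (hmono : ∀ k < K, Φ (x (k + 1)) ≤ Φ (x k))
    (σ : ℕ → ℝ) (σmax : ℝ)
    (hpos : ∀ k ≤ K, 0 < σ k) (hmax : ∀ k ≤ K, σ k ≤ σmax)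
    (η₁ κmdc ε : ℝ)
    (hη₁ : η₁ ∈ Set.Ioo (0 : ℝ) 1) (hκ : κmdc ∈ Set.Ioo (0 : ℝ) 1)
    (hε : ε ∈ Set.Ioo (0 : ℝ) 1)
    (γ₁ γ₃ : ℝ) (hγ₁ : 1 < γ₁) (hγ₃ : γ₃ ∈ Set.Ioc (0 : ℝ) 1)
    (S U : Finset ℕ) (hSU : S ∪ U = Finset.range K) (hdisj : Disjoint S U)
    (hS : ∀ k ∈ S,
      ((η₁ * κmdc * ε ^ 2 : ℝ) : EReal) ≤ Φ (x k) - Φ (x (k + 1)) ∧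
      γ₃ * σ k ≤ σ (k + 1))
    (hU : ∀ k ∈ U, γ₁ * σ k ≤ σ (k + 1)) :
    K = S.card + U.card ∧
    (K : ℝ) ≤ (1 + |Real.log γ₃| / Real.log γ₁)
        * (((Φ (x 0)).toReal - Φlow) / (η₁ * κmdc * ε ^ 2))
      + Real.log (σmax / σ 0) / Real.log γ₁ := by
  have hcard : K = S.card + U.card := by
    rw [← Finset.card_range K, ← hSU, Finset.card_union_of_disjoint hdisj]
  refine ⟨hcard, ?_⟩
  set δ : ℝ := η₁ * κmdc * ε ^ 2 with hδ
  have hδpos : 0 < δ := mul_pos (mul_pos hη₁.1 hκ.1) (pow_pos hε.1 2)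
  -- membership facts
  have hmemS : ∀ k ∈ S, k < K := fun k hk =>
    Finset.mem_range.mp (hSU ▸ Finset.mem_union_left _ hk)
  have hmemU : ∀ k ∈ U, k < K := fun k hk =>
    Finset.mem_range.mp (hSU ▸ Finset.mem_union_right _ hk)
  -- finiteness of Φ along iterates
  have hle0 : ∀ k ≤ K, Φ (x k) ≤ Φ (x 0) := by
    intro k hk
    induction k with
    | zero => exact le_refl _
    | succ m ih => exact le_trans (hmono m (by omega)) (ih (by omega))
  have hfin : ∀ k ≤ K, Φ (x k) ≠ ⊤ ∧ Φ (x k) ≠ ⊥ := by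
    intro k hk
    exact ⟨((hle0 k hk).trans_lt h0).ne,
      (((EReal.bot_lt_coe Φlow).trans_le (hlow _))).ne'⟩
  set φ : ℕ → ℝ := fun k => (Φ (x k)).toReal with hφ
  have hcoe : ∀ k ≤ K, ((φ k : ℝ) : EReal) = Φ (x k) := fun k hk =>
    EReal.coe_toReal (hfin k hk).1 (hfin k hk).2
  have hmonoR : ∀ k < K, φ (k + 1) ≤ φ k := by
    intro k hk
    rw [← EReal.coe_le_coe_iff, hcoe _ (by omega), hcoe _ (by omega)]
    exact hmono k hk
  have hlowR : Φlow ≤ φ K := by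
    rw [← EReal.coe_le_coe_iff, hcoe K le_rfl]
    exact hlow _
  have hSR : ∀ k ∈ S, δ ≤ φ k - φ (k + 1) := by
    intro k hkS
    have hk : k < K := hmemS k hkS
    have h := (hS k hkS).1
    rw [← hcoe k (by omega), ← hcoe (k + 1) (by omega), ← EReal.coe_sub] at h
    exact_mod_cast h
  -- sum bound on S
  have htel : ∑ k ∈ Finset.range K, (φ k - φ (k + 1)) = φ 0 - φ K :=
    Finset.sum_range_sub' φ K
  have hsplit : ∑ k ∈ Finset.range K, (φ k - φ (k + 1))
      = ∑ k ∈ S, (φ k - φ (k + 1)) + ∑ k ∈ U, (φ k - φ (k + 1)) := by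
    rw [← hSU, Finset.sum_union hdisj]
  have hUsum : 0 ≤ ∑ k ∈ U, (φ k - φ (k + 1)) :=
    Finset.sum_nonneg fun k hk => sub_nonneg.mpr (hmonoR k (hmemU k hk))
  have hSsum : (S.card : ℝ) * δ ≤ ∑ k ∈ S, (φ k - φ (k + 1)) := by
    have := Finset.card_nsmul_le_sum S (fun k => φ k - φ (k + 1)) δ hSR
    simpa [nsmul_eq_mul] using this
  have hsδ : (S.card : ℝ) * δ ≤ φ 0 - Φlow := by
    have : (S.card : ℝ) * δ ≤ φ 0 - φ K := by
      rw [← htel, hsplit]; linarith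
    linarith
  -- log part
  have hσ0 := hpos 0 (Nat.zero_le K)
  have hσmax : 0 < σmax := lt_of_lt_of_le hσ0 (hmax 0 (Nat.zero_le K))
  have hL : 0 < Real.log γ₁ := Real.log_pos hγ₁
  have hlogtel : Real.log (σ K) - Real.log (σ 0)
      = ∑ k ∈ Finset.range K, (Real.log (σ (k + 1)) - Real.log (σ k)) :=
    (Finset.sum_range_sub (fun k => Real.log (σ k)) K).symm
  have hlogsplit : ∑ k ∈ Finset.range K, (Real.log (σ (k + 1)) - Real.log (σ k))
      = ∑ k ∈ S, (Real.log (σ (k + 1)) - Real.log (σ k))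
        + ∑ k ∈ U, (Real.log (σ (k + 1)) - Real.log (σ k)) := by
    rw [← hSU, Finset.sum_union hdisj]
  have hSlog : (S.card : ℝ) * Real.log γ₃
      ≤ ∑ k ∈ S, (Real.log (σ (k + 1)) - Real.log (σ k)) := by
    have hterm : ∀ k ∈ S, Real.log γ₃ ≤ Real.log (σ (k + 1)) - Real.log (σ k) := by
      intro k hk
      have hkK : k < K := hmemS k hk
      have hσk := hpos k (by omega)
      have h1 : Real.log (γ₃ * σ k) ≤ Real.log (σ (k + 1)) :=
        Real.log_le_log (mul_pos hγ₃.1 hσk) (hS k hk).2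
      rw [Real.log_mul (ne_of_gt hγ₃.1) (ne_of_gt hσk)] at h1
      linarith
    have := Finset.card_nsmul_le_sum S _ (Real.log γ₃) hterm
    simpa [nsmul_eq_mul] using this
  have hUlog : (U.card : ℝ) * Real.log γ₁
      ≤ ∑ k ∈ U, (Real.log (σ (k + 1)) - Real.log (σ k)) := by
    have hterm : ∀ k ∈ U, Real.log γ₁ ≤ Real.log (σ (k + 1)) - Real.log (σ k) := by
      intro k hk
      have hkK : k < K := hmemU k hk
      have hσk := hpos k (by omega)
      have h1 : Real.log (γ₁ * σ k) ≤ Real.log (σ (k + 1)) :=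
        Real.log_le_log (mul_pos (lt_trans one_pos hγ₁) hσk) (hU k hk)
      rw [Real.log_mul (by positivity) (ne_of_gt hσk)] at h1
      linarith
    have := Finset.card_nsmul_le_sum U _ (Real.log γ₁) hterm
    simpa [nsmul_eq_mul] using this
  have hσKmax : Real.log (σ K) ≤ Real.log σmax :=
    Real.log_le_log (hpos K le_rfl) (hmax K le_rfl)
  have hlogdiv : Real.log (σmax / σ 0) = Real.log σmax - Real.log (σ 0) :=
    Real.log_div (ne_of_gt hσmax) (ne_of_gt hσ0)
  -- abbreviations
  set s : ℝ := (S.card : ℝ)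
  set u : ℝ := (U.card : ℝ)
  set L : ℝ := Real.log γ₁
  set C : ℝ := Real.log (σmax / σ 0)
  have hB : |Real.log γ₃| = -Real.log γ₃ :=
    abs_of_nonpos (Real.log_nonpos (le_of_lt hγ₃.1) hγ₃.2)
  have hBnn : 0 ≤ -Real.log γ₃ := by
    rw [← hB]; exact abs_nonneg _
  have hkey : s * Real.log γ₃ + u * L ≤ C := by
    have : s * Real.log γ₃ + u * L
        ≤ Real.log (σ K) - Real.log (σ 0) := by
      rw [hlogtel, hlogsplit]; linarith
    rw [hlogdiv]; linarith
  -- final arithmetic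
  have hKsu : (K : ℝ) = s + u := by
    rw [hcard]; push_cast; ring
  have hu : u ≤ (s * (-Real.log γ₃) + C) / L := by
    rw [le_div_iff₀ hL]; linarith
  have hs : s ≤ (φ 0 - Φlow) / δ := by
    rw [le_div_iff₀ hδpos]; linarith
  have h1B : 0 ≤ 1 + (-Real.log γ₃) / L := by positivity
  have hmul : s * (1 + (-Real.log γ₃) / L)
      ≤ ((φ 0 - Φlow) / δ) * (1 + (-Real.log γ₃) / L) :=
    mul_le_mul_of_nonneg_right hs h1B
  have hfinal : (K : ℝ) ≤ (1 + (-Real.log γ₃) / L) * ((φ 0 - Φlow) / δ) + C / L := by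
    have hexp : (s * (-Real.log γ₃) + C) / L = s * ((-Real.log γ₃) / L) + C / L := by
      field_simp
    nlinarith [hu, hmul]
  rw [hB]
  exact hfinal
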